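/- Let Γ be a finitely generated abelian group and K an algebraically closed field. If σ and σ' are factor sets on Γ over K such that σ(i,j)·σ(j,i)⁻¹ = σ'(i,j)·σ'(j,i)⁻¹ for all i, j ∈ Γ, then σ and σ' are equivalent: there exists a map ρ : Γ → Kˣ such that σ'(i,j) = σ(i,j)·ρ(i+j)·ρ(i)⁻¹·ρ(j)⁻¹ for all i, j ∈ Γ. Equivalently, every proper commutation factor on Γ over K is constructed from a unique multiplier. -/

import Mathlib

namespace St5Aux

variable {Γ K : Type*} [AddCommGroup Γ] [Field K]

structure SymCocycle (Γ K : Type*) [AddCommGroup Γ] [Field K] where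
  τ : Γ → Γ → Kˣ
  cocycle : ∀ i j k, τ i (j + k) * τ j k = τ i j * τ (i + j) k
  symm : ∀ i j, τ i j = τ j i
  norm : ∀ i, τ 0 i = 1

namespace SymCocycle

variable (c : SymCocycle Γ K)

lemma norm' (i : Γ) : c.τ i 0 = 1 := by rw [c.symm]; exact c.norm i

def E (_c : SymCocycle Γ K) : Type _ := Kˣ × Γ

def mk' (a : Kˣ) (g : Γ) : c.E := (a, g)

instance : Zero c.E := ⟨((1 : Kˣ), (0 : Γ))⟩
instance : Add c.E := ⟨fun x y => (x.1 * y.1 * c.τ x.2 y.2, x.2 + y.2)⟩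
instance : Neg c.E := ⟨fun x => (x.1⁻¹ * (c.τ x.2 (-x.2))⁻¹, -x.2)⟩

instance : AddCommGroup c.E where
  add x y := x + y
  zero := 0
  neg x := -x
  nsmul := nsmulRec
  zsmul := zsmulRec
  add_assoc x y z := by
    refine Prod.ext ?_ (add_assoc _ _ _)
    show x.1 * y.1 * c.τ x.2 y.2 * z.1 * c.τ (x.2 + y.2) z.2
       = x.1 * (y.1 * z.1 * c.τ y.2 z.2) * c.τ x.2 (y.2 + z.2)
    have h := congrArg Units.val (c.cocycle x.2 y.2 z.2)
    apply Units.ext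
    simp only [Units.val_mul] at h ⊢
    linear_combination (x.1 : K) * y.1 * z.1 * h.symm
  zero_add x := by
    refine Prod.ext ?_ (zero_add _)
    show (1 : Kˣ) * x.1 * c.τ 0 x.2 = x.1
    rw [c.norm, one_mul, mul_one]
  add_zero x := by
    refine Prod.ext ?_ (add_zero _)
    show x.1 * 1 * c.τ x.2 0 = x.1
    rw [c.norm', mul_one, mul_one]
  neg_add_cancel x := by
    refine Prod.ext ?_ (neg_add_cancel _)
    show x.1⁻¹ * (c.τ x.2 (-x.2))⁻¹ * x.1 * c.τ (-x.2) x.2 = 1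
    rw [← c.symm x.2 (-x.2)]
    apply Units.ext
    simp only [Units.val_mul, Units.val_inv_eq_inv_val, Units.val_one]
    field_simp
  add_comm x y := by
    refine Prod.ext ?_ (add_comm _ _)
    show x.1 * y.1 * c.τ x.2 y.2 = y.1 * x.1 * c.τ y.2 x.2
    rw [mul_comm x.1 y.1, c.symm]

def ι : Additive Kˣ →+ c.E :=
  AddMonoidHom.mk' (fun a => c.mk' a.toMul 0) (fun a b => by
    refine Prod.ext ?_ (zero_add (0:Γ)).symm
    show (a + b).toMul = a.toMul * b.toMul * c.τ 0 0
    rw [c.norm, mul_one]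
    rfl)

lemma ι_injective : Function.Injective c.ι := by
  intro a b h
  have : (c.mk' a.toMul 0).1 = (c.mk' b.toMul 0).1 := congrArg Prod.fst h
  exact Additive.toMul.injective this

lemma key (i j : Γ) :
    c.mk' 1 i + c.mk' 1 j
      = c.ι (Additive.ofMul (c.τ i j)) + c.mk' 1 (i + j) := by
  refine Prod.ext ?_ ?_
  · show (1 : Kˣ) * 1 * c.τ i j = c.τ i j * 1 * c.τ 0 (i + j)
    rw [c.norm, one_mul, one_mul, mul_one, mul_one]
  · show i + j = 0 + (i + j)
    rw [zero_add]

lemma main [DivisibleBy (Additive Kˣ) ℤ] :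
    ∃ f : Γ → Kˣ, ∀ i j, c.τ i j = f (i + j) * (f i)⁻¹ * (f j)⁻¹ := by
  obtain ⟨r, hr⟩ := (Module.Baer.of_divisible (Additive Kˣ)).extension_property_addMonoidHom
    c.ι c.ι_injective (AddMonoidHom.id _)
  have hr' : ∀ a, r (c.ι a) = a := fun a => DFunLike.congr_fun hr a
  set m : Γ → Kˣ := fun γ => (r (c.mk' 1 γ)).toMul with hm
  have hkey : ∀ i j, m i * m j = c.τ i j * m (i + j) := by
    intro i j
    have h1 : r (c.mk' 1 i + c.mk' 1 j)
        = r (c.mk' 1 i) + r (c.mk' 1 j) := map_add r _ _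
    rw [c.key i j, map_add, hr'] at h1
    have := congrArg Additive.toMul h1.symm
    simpa [toMul_add, hm] using this
  refine ⟨fun γ => (m γ)⁻¹, fun i j => ?_⟩
  have h := hkey i j
  apply Units.ext
  have h' := congrArg Units.val h
  simp only [Units.val_mul, Units.val_inv_eq_inv_val] at h' ⊢
  field_simp
  linear_combination (-1 : K) * h'

end SymCocycle

noncomputable instance (K : Type*) [Field K] [IsAlgClosed K] : RootableBy Kˣ ℕ :=
  rootableByOfPowLeftSurj _ _ (fun {n} hn u => by
    obtain ⟨z, hz⟩ := IsAlgClosed.exists_pow_nat_eq (u : K) (Nat.pos_of_ne_zero hn)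
    have hz0 : z ≠ 0 := by
      intro h
      rw [h, zero_pow hn] at hz
      exact (Units.ne_zero u) hz.symm
    refine ⟨Units.mk0 z hz0, Units.ext ?_⟩
    push_cast
    simpa using hz)

noncomputable instance (K : Type*) [Field K] [IsAlgClosed K] : RootableBy Kˣ ℤ :=
  Group.rootableByIntOfRootableByNat _

noncomputable instance (K : Type*) [Field K] [IsAlgClosed K] :
    DivisibleBy (Additive Kˣ) ℤ where
  div a n := Additive.ofMul (RootableBy.root a.toMul n)
  div_zero a := congrArg Additive.ofMul (RootableBy.root_zero _)
  div_cancel {n} a hn := by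
    have := RootableBy.root_cancel (α := ℤ) a.toMul hn
    apply Additive.toMul.injective
    simpa using this

end St5Aux

theorem statement5 {Γ K : Type*} [AddCommGroup Γ] [AddGroup.FG Γ] [Field K] [IsAlgClosed K]
    (σ σ' : Γ → Γ → Kˣ)
    (hσ : ∀ i j k, σ i (j + k) * σ j k = σ i j * σ (i + j) k)
    (hσ' : ∀ i j k, σ' i (j + k) * σ' j k = σ' i j * σ' (i + j) k)
    (heq : ∀ i j, σ i j * (σ j i)⁻¹ = σ' i j * (σ' j i)⁻¹) :
    ∃ ρ : Γ → Kˣ, ∀ i j, σ' i j = σ i j * ρ (i + j) * (ρ i)⁻¹ * (ρ j)⁻¹ := by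
  classical
  set τ : Γ → Γ → Kˣ := fun i j => σ' i j * (σ i j)⁻¹ with hτdef
  have hτc : ∀ i j k, τ i (j + k) * τ j k = τ i j * τ (i + j) k := by
    intro i j k
    have A := congrArg Units.val (hσ i j k)
    have B := congrArg Units.val (hσ' i j k)
    apply Units.ext
    simp only [hτdef, Units.val_mul, Units.val_inv_eq_inv_val] at A B ⊢
    field_simp
    linear_combination (σ i j : K) * (σ (i+j) k : K) * B - (σ' i j : K) * (σ' (i+j) k : K) * A
  have hτs : ∀ i j, τ i j = τ j i := by
    intro i j
    have H := congrArg Units.val (heq i j)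
    apply Units.ext
    simp only [hτdef, Units.val_mul, Units.val_inv_eq_inv_val] at H ⊢
    field_simp at H ⊢
    linear_combination (-1 : K) * H
  have h0 : ∀ i, τ 0 i = τ 0 0 := by
    intro i
    have := hτc 0 0 i
    rw [zero_add, zero_add] at this
    exact mul_right_cancel this
  set c : St5Aux.SymCocycle Γ K :=
    { τ := fun i j => τ i j * (τ 0 0)⁻¹
      cocycle := by
        intro i j k
        show (τ i (j+k) * (τ 0 0)⁻¹) * (τ j k * (τ 0 0)⁻¹)
            = (τ i j * (τ 0 0)⁻¹) * (τ (i+j) k * (τ 0 0)⁻¹)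
        rw [mul_mul_mul_comm, mul_mul_mul_comm (τ i j)]
        rw [hτc]
      symm := by
        intro i j
        show τ i j * (τ 0 0)⁻¹ = τ j i * (τ 0 0)⁻¹
        rw [hτs i j]
      norm := by
        intro i
        show τ 0 i * (τ 0 0)⁻¹ = 1
        rw [h0 i, mul_inv_cancel] } with hc
  obtain ⟨f, hf⟩ := c.main
  refine ⟨fun γ => f γ * (τ 0 0)⁻¹, fun i j => ?_⟩
  have h := congrArg Units.val (hf i j)
  apply Units.ext
  simp only [hc, hτdef, Units.val_mul, Units.val_inv_eq_inv_val] at h ⊢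
  field_simp at h ⊢
  linear_combination h
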